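/- Let K, F, S be positive integers with F ≥ 2. If a (K,F,F−2,S)-PDA exists, then S ≥ ⌈2K/F⌉ + ⌈⌈2K/F⌉/(F−1)⌉. -/

import Mathlib

/-- A `(K, F, Z, S)` placement delivery array: an `F × K` array over
`{0, …, S-1} ∪ {*}` (with `none` playing the role of `*`) such that
(1) each integer occurs at most once in each row and in each column,
(2) whenever two distinct cells `(a, b)` and `(c, d)` contain the same
integer, the opposite corners `(a, d)` and `(c, b)` contain `*`, and
(3) the symbol `*` occurs exactly `Z` times in each column. -/
def IsPDA (K F Z S : ℕ) (P : Fin F → Fin K → Option (Fin S)) : Prop :=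
  (∀ (i : Fin F) (j j' : Fin K) (s : Fin S), P i j = some s → P i j' = some s → j = j') ∧
  (∀ (i i' : Fin F) (j : Fin K) (s : Fin S), P i j = some s → P i' j = some s → i = i') ∧
  (∀ (a c : Fin F) (b d : Fin K) (s : Fin S),
      (a, b) ≠ (c, d) → P a b = some s → P c d = some s →
      P a d = none ∧ P c b = none) ∧
  (∀ j : Fin K, (Finset.univ.filter (fun i => P i j = none)).card = Z)

/-- There exists a `(K, F, Z, S)` placement delivery array. -/
def PDAExists (K F Z S : ℕ) : Prop :=
  ∃ P : Fin F → Fin K → Option (Fin S), IsPDA K F Z S P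

theorem pda_lower_bound_Z_eq_F_sub_two (K F S : ℕ) (hK : 0 < K) (hS : 0 < S) (hF : 2 ≤ F)
    (hP : PDAExists K F (F - 2) S) :
    (S : ℤ) ≥ ⌈(2 * (K : ℚ)) / (F : ℚ)⌉ +
      ⌈((⌈(2 * (K : ℚ)) / (F : ℚ)⌉ : ℚ)) / ((F : ℚ) - 1)⌉ := by
  classical
  obtain ⟨P, hrow, hcolu, hcorner, hstar⟩ := hP
  -- each column has exactly 2 non-star cells
  have hcol2 : ∀ j : Fin K, (Finset.univ.filter (fun i => ¬ P i j = none)).card = 2 := by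
    intro j
    have h := Finset.card_filter_add_card_filter_not
      (s := (Finset.univ : Finset (Fin F))) (p := fun i => P i j = none)
    have h4j := hstar j
    have hc : (Finset.univ : Finset (Fin F)).card = F := by simp
    omega
  set e : Fin F → ℕ := fun i => (Finset.univ.filter (fun j => ¬ P i j = none)).card with he
  have hsum : ∑ i : Fin F, e i = 2 * K := by
    have h1 : ∑ i : Fin F, e i
        = ∑ j : Fin K, (Finset.univ.filter (fun i => ¬ P i j = none)).card := by
      simp only [he, Finset.card_filter]
      rw [Finset.sum_comm]
    rw [h1]
    simp only [hcol2, Finset.sum_const, Finset.card_univ, Fintype.card_fin, smul_eq_mul]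
    ring
  -- pigeonhole: a row r with many non-stars
  obtain ⟨r, -, hr⟩ : ∃ r ∈ (Finset.univ : Finset (Fin F)), 2 * K ≤ F * e r := by
    apply Finset.exists_le_of_sum_le
    · exact ⟨⟨0, by omega⟩, Finset.mem_univ _⟩
    · rw [Finset.sum_const, ← Finset.mul_sum, hsum]
      simp [Fintype.card_fin, mul_comm]
  set C : Finset (Fin K) := Finset.univ.filter (fun j => ¬ P r j = none) with hC
  have hCcard : C.card = e r := rfl
  set T : Finset (Fin S) := Finset.univ.filter (fun s => ∃ j, P r j = some s) with hT
  set U : Finset (Fin S) :=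
    Finset.univ.filter (fun s => ∃ i j, i ≠ r ∧ P i j = some s ∧ ¬ P r j = none) with hU
  haveI : Inhabited (Fin S) := ⟨⟨0, hS⟩⟩
  -- e r ≤ T.card
  have hTcard : e r ≤ T.card := by
    rw [← hCcard]
    apply Finset.card_le_card_of_injOn (fun j => (P r j).iget)
    · intro j hj
      rw [hC, Finset.mem_coe, Finset.mem_filter] at hj
      obtain ⟨s, hs⟩ := Option.ne_none_iff_exists'.mp hj.2
      rw [Finset.mem_coe, hT, Finset.mem_filter]
      exact ⟨Finset.mem_univ _, ⟨j, by beta_reduce; rw [hs] <;> rfl⟩⟩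
    · intro j hj j' hj' hjj'
      rw [hC, Finset.coe_filter] at hj hj'
      obtain ⟨s, hs⟩ := Option.ne_none_iff_exists'.mp hj.2
      obtain ⟨s', hs'⟩ := Option.ne_none_iff_exists'.mp hj'.2
      simp only at hjj'
      rw [hs, hs'] at hjj'
      change s = s' at hjj'
      exact hrow r j j' s hs (hjj' ▸ hs')
  -- T and U are disjoint
  have hdisj : Disjoint T U := by
    rw [Finset.disjoint_left]
    intro s hsT hsU
    rw [hT, Finset.mem_filter] at hsT
    rw [hU, Finset.mem_filter] at hsU
    obtain ⟨j', hj'⟩ := hsT.2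
    obtain ⟨i, j, hir, hij, hrj⟩ := hsU.2
    have hne : ((i, j) : Fin F × Fin K) ≠ (r, j') := by
      intro h
      exact hir (congrArg Prod.fst h)
    exact hrj (hcorner i r j j' s hne hij hj').2
  -- fibers
  set fib : Fin S → Finset (Fin K) :=
    fun s => C.filter (fun j => ∃ i, i ≠ r ∧ P i j = some s) with hfib
  have hcover : C ⊆ U.biUnion fib := by
    intro j hj
    have hj2 := hj
    rw [hC, Finset.mem_filter] at hj2
    have h2 : 1 < (Finset.univ.filter (fun i => ¬ P i j = none)).card := by
      rw [hcol2 j]; omega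
    have hrmem : r ∈ Finset.univ.filter (fun i => ¬ P i j = none) :=
      Finset.mem_filter.mpr ⟨Finset.mem_univ _, hj2.2⟩
    obtain ⟨i, hi, hir⟩ := Finset.exists_mem_ne h2 r
    rw [Finset.mem_filter] at hi
    obtain ⟨s, hs⟩ := Option.ne_none_iff_exists'.mp hi.2
    apply Finset.mem_biUnion.mpr
    refine ⟨s, ?_, ?_⟩
    · rw [hU, Finset.mem_filter]
      exact ⟨Finset.mem_univ _, i, j, hir, hs, hj2.2⟩
    · rw [hfib, Finset.mem_filter]
      exact ⟨hj, i, hir, hs⟩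
  have hfibcard : ∀ s ∈ U, (fib s).card ≤ F - 1 := by
    intro s hsU
    have : (fib s).card ≤ (Finset.univ.erase r).card := by
      apply Finset.card_le_card_of_injOn
        (fun j => if h : ∃ i, i ≠ r ∧ P i j = some s then h.choose else r)
      · intro j hj
        rw [hfib, Finset.mem_coe, Finset.mem_filter] at hj
        beta_reduce
        rw [dif_pos hj.2]
        exact Finset.mem_erase.mpr ⟨hj.2.choose_spec.1, Finset.mem_univ _⟩
      · intro j hj j' hj' hjj'
        rw [hfib, Finset.coe_filter] at hj hj'
        simp only at hjj'
        rw [dif_pos hj.2, dif_pos hj'.2] at hjj'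
        have h1 := hj.2.choose_spec.2
        have h2 := hj'.2.choose_spec.2
        rw [hjj'] at h1
        exact hrow _ j j' s h1 h2
    rw [Finset.card_erase_of_mem (Finset.mem_univ _), Finset.card_univ, Fintype.card_fin] at this
    exact this
  have hUcard : e r ≤ U.card * (F - 1) := by
    calc e r = C.card := hCcard.symm
      _ ≤ (U.biUnion fib).card := Finset.card_le_card hcover
      _ ≤ ∑ s ∈ U, (fib s).card := Finset.card_biUnion_le
      _ ≤ ∑ _s ∈ U, (F - 1) := Finset.sum_le_sum hfibcard
      _ = U.card * (F - 1) := by rw [Finset.sum_const, smul_eq_mul]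
  have hTU : T.card + U.card ≤ S := by
    rw [← Finset.card_union_of_disjoint hdisj]
    calc (T ∪ U).card ≤ (Finset.univ : Finset (Fin S)).card := Finset.card_le_card (Finset.subset_univ _)
      _ = S := by rw [Finset.card_univ, Fintype.card_fin]
  -- final arithmetic
  have hF0 : (0 : ℚ) < (F : ℚ) := by exact_mod_cast (by omega : 0 < F)
  have hF1 : (0 : ℚ) < (F : ℚ) - 1 := by
    have : (1 : ℚ) < (F : ℚ) := by exact_mod_cast (by omega : 1 < F)
    linarith
  have hc1 : ⌈(2 * (K : ℚ)) / (F : ℚ)⌉ ≤ (e r : ℤ) := by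
    rw [Int.ceil_le, div_le_iff₀ hF0]
    calc (2 * (K : ℚ)) ≤ (F : ℚ) * (e r) := by exact_mod_cast hr
      _ = ((e r : ℤ) : ℚ) * (F : ℚ) := by push_cast; ring
  have hc2 : ⌈((⌈(2 * (K : ℚ)) / (F : ℚ)⌉ : ℚ)) / ((F : ℚ) - 1)⌉ ≤ (U.card : ℤ) := by
    rw [Int.ceil_le, div_le_iff₀ hF1]
    have hc1' : ((⌈(2 * (K : ℚ)) / (F : ℚ)⌉ : ℤ) : ℚ) ≤ (e r : ℚ) := by exact_mod_cast hc1
    have h3q : (e r : ℚ) ≤ (U.card : ℚ) * ((F : ℚ) - 1) := by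
      calc (e r : ℚ) ≤ ((U.card * (F - 1) : ℕ) : ℚ) := by exact_mod_cast hUcard
        _ = (U.card : ℚ) * ((F : ℚ) - 1) := by
            rw [Nat.cast_mul, Nat.cast_sub (by omega : 1 ≤ F)]; norm_num
    calc ((⌈(2 * (K : ℚ)) / (F : ℚ)⌉ : ℤ) : ℚ) ≤ (e r : ℚ) := hc1'
      _ ≤ ((U.card : ℤ) : ℚ) * ((F : ℚ) - 1) := by push_cast; push_cast at h3q; linarith
  have hST : (e r : ℤ) + (U.card : ℤ) ≤ (S : ℤ) := by
    exact_mod_cast le_trans (add_le_add_left hTcard _) hTU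
  rw [ge_iff_le]
  linarith [hc1, hc2, hST]
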